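/- Let $W$ be a standard Brownian motion, $b\in\mathbb{R}$, and $\tilde{g}_t := \sup\{s\leq t: W_s = bs\}$ the last passage time of $W$ at the line $s\mapsto bs$ before $t$. Then for every integer $k\geq 1$, $\mathbb{E}[\tilde{g}_t^{\,k}] = \frac{\Gamma(k+\frac12)}{\sqrt{\pi}\,(k-1)!}\int_0^t u^{k-1}e^{-\frac{b^2}{2}u}\,du$. -/

import Mathlib

open MeasureTheory Real

/-- Standard normal density. -/
noncomputable def stdNormalPdf (x : ℝ) : ℝ := (Real.sqrt (2 * Real.pi))⁻¹ * Real.exp (-x ^ 2 / 2)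

/-- Standard normal CDF. -/
noncomputable def stdNormalCdf (x : ℝ) : ℝ := ∫ u in Set.Iic x, stdNormalPdf u

open Set

/-- the half-Gaussian kernel -/
noncomputable def auxH (b v : ℝ) : ℝ :=
  Real.exp (-(b^2/2) * v) / (Real.sqrt (2*Real.pi) * Real.sqrt v)

lemma auxH_nonneg (b v : ℝ) : 0 ≤ auxH b v := by
  unfold auxH; positivity

lemma auxH_meas (b : ℝ) : Measurable (auxH b) := by
  unfold auxH; fun_prop

lemma sqrt_two_pi_pos : (0:ℝ) < Real.sqrt (2*Real.pi) := by
  positivity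

lemma phi_pos (x : ℝ) : 0 < stdNormalPdf x := by
  unfold stdNormalPdf; positivity

lemma phi_cont : Continuous stdNormalPdf := by
  unfold stdNormalPdf; fun_prop

lemma phi_sqrt_div (b : ℝ) {s : ℝ} (hs : 0 ≤ s) :
    stdNormalPdf (b * Real.sqrt s) / Real.sqrt s = auxH b s := by
  unfold stdNormalPdf auxH
  rw [mul_pow, Real.sq_sqrt hs, show -(b^2*s)/2 = -(b^2/2)*s by ring]
  field_simp

lemma auxH_integrableOn {b w : ℝ} : IntegrableOn (auxH b) (Set.Ioo 0 w) := by
  rcases le_or_gt w 0 with h | h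
  · rw [Set.Ioo_eq_empty (not_lt.2 h)]
    exact integrableOn_empty
  have hg : IntegrableOn (fun v : ℝ => (Real.sqrt (2*Real.pi))⁻¹ * v ^ (-(1/2) : ℝ)) (Set.Ioo 0 w) := by
    have := (intervalIntegral.intervalIntegrable_rpow' (r := -(1/2)) (by norm_num) (a := 0) (b := w))
    rw [intervalIntegrable_iff, Set.uIoc_of_le h.le] at this
    exact ((this.mono_set Set.Ioo_subset_Ioc_self).const_mul _)
  refine hg.mono' ((auxH_meas b).aestronglyMeasurable.restrict) ?_
  filter_upwards [ae_restrict_mem measurableSet_Ioo] with v hv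
  rw [Real.norm_eq_abs, abs_of_nonneg (auxH_nonneg b v)]
  unfold auxH
  rw [Real.rpow_neg hv.1.le, ← Real.sqrt_eq_rpow]
  have h1 : Real.exp (-(b^2/2)*v) ≤ 1 := by
    rw [Real.exp_le_one_iff]
    nlinarith [sq_nonneg b, hv.1.le]
  have h2 : (0:ℝ) < Real.sqrt (2*Real.pi) * Real.sqrt v := by
    have := Real.sqrt_pos.2 hv.1
    positivity
  calc Real.exp (-(b^2/2)*v) / (Real.sqrt (2*Real.pi) * Real.sqrt v)
      ≤ 1 / (Real.sqrt (2*Real.pi) * Real.sqrt v) := by gcongr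
    _ = (Real.sqrt (2*Real.pi))⁻¹ * (Real.sqrt v)⁻¹ := by rw [one_div, mul_inv]

lemma integral_phi : ∫ x, stdNormalPdf x = 1 := by
  unfold stdNormalPdf
  rw [MeasureTheory.integral_const_mul]
  have : ∀ x : ℝ, Real.exp (-x^2/2) = Real.exp (-(1/2) * x^2) := fun x => by ring_nf
  simp_rw [this]
  rw [integral_gaussian]
  rw [inv_mul_eq_div, div_eq_one_iff_eq (by positivity)]
  rw [show Real.pi / (1/2) = 2 * Real.pi by ring]

lemma phi_integrable : Integrable stdNormalPdf := by
  unfold stdNormalPdf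
  have : ∀ x : ℝ, -x^2/2 = -(1/2) * x^2 := fun x => by ring
  simp_rw [this]
  exact (integrable_exp_neg_mul_sq (by norm_num : (0:ℝ) < 1/2)).const_mul _

lemma cdf_zero : stdNormalCdf 0 = 1/2 := by
  have heven : ∀ x : ℝ, stdNormalPdf (-x) = stdNormalPdf x := fun x => by
    simp [stdNormalPdf, neg_sq]
  have h1 : stdNormalCdf 0 = ∫ x in Set.Ioi (0:ℝ), stdNormalPdf x := by
    unfold stdNormalCdf
    rw [show ((0:ℝ) = -0) by norm_num, ← integral_comp_neg_Iic]
    simp_rw [heven]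
    norm_num
  have h2 : stdNormalCdf 0 + ∫ x in Set.Ioi (0:ℝ), stdNormalPdf x = 1 := by
    unfold stdNormalCdf
    rw [intervalIntegral.integral_Iic_add_Ioi phi_integrable.integrableOn
      phi_integrable.integrableOn, integral_phi]
  linarith

lemma cdf_eq (x : ℝ) : stdNormalCdf x = stdNormalCdf 0 + ∫ u in (0:ℝ)..x, stdNormalPdf u := by
  unfold stdNormalCdf
  rw [← intervalIntegral.integral_Iic_sub_Iic phi_integrable.integrableOn
    phi_integrable.integrableOn]
  ring

lemma hasDerivAt_cdf (x : ℝ) : HasDerivAt stdNormalCdf (stdNormalPdf x) x := by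
  have : stdNormalCdf = fun x => stdNormalCdf 0 + ∫ u in (0:ℝ)..x, stdNormalPdf u :=
    funext cdf_eq
  rw [this]
  exact (intervalIntegral.integral_hasDerivAt_right phi_integrable.intervalIntegrable
    phi_integrable.aestronglyMeasurable.stronglyMeasurableAtFilter
    phi_cont.continuousAt).const_add _

lemma cdf_cont : Continuous stdNormalCdf :=
  continuous_iff_continuousAt.2 fun x => (hasDerivAt_cdf x).continuousAt

lemma cdf_term (b : ℝ) {w : ℝ} (hw : 0 < w) :
    2*b*stdNormalCdf (b*Real.sqrt w) - b = b^2 * ∫ v in Set.Ioo 0 w, auxH b v := by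
  set G : ℝ → ℝ := fun v => 2*b*stdNormalCdf (b*Real.sqrt v) - b with hG
  have hG0 : G 0 = 0 := by
    simp [hG, Real.sqrt_zero, cdf_zero]; ring
  have hderiv : ∀ v ∈ Set.Ioo (0:ℝ) w, HasDerivAt G (b^2 * auxH b v) v := by
    intro v hv
    have hs : HasDerivAt Real.sqrt (1/(2*Real.sqrt v)) v := Real.hasDerivAt_sqrt hv.1.ne'
    have h2 : HasDerivAt (fun v => b * Real.sqrt v) (b * (1/(2*Real.sqrt v))) v :=
      hs.const_mul b
    have h3 := ((hasDerivAt_cdf (b * Real.sqrt v)).comp v h2)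
    have h4 := (h3.const_mul (2*b)).sub_const b
    refine h4.congr_deriv ?_
    have hsv : (0:ℝ) < Real.sqrt v := Real.sqrt_pos.2 hv.1
    have := phi_sqrt_div b hv.1.le
    field_simp at this ⊢
    nlinarith [this]
  have hcont : ContinuousOn G (Set.Icc 0 w) :=
    ((continuous_const.mul (cdf_cont.comp (continuous_const.mul
      Real.continuous_sqrt))).sub continuous_const).continuousOn
  have hint : IntervalIntegrable (fun v => b^2 * auxH b v) volume 0 w := by
    rw [intervalIntegrable_iff, Set.uIoc_of_le hw.le]
    exact ((integrableOn_Ioc_iff_integrableOn_Ioo).2 (auxH_integrableOn)).const_mul _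
  have := intervalIntegral.integral_eq_sub_of_hasDeriv_right_of_le hw.le hcont
    (fun v hv => (hderiv v hv).hasDerivWithinAt) hint
  rw [hG0, sub_zero] at this
  rw [show 2*b*stdNormalCdf (b*Real.sqrt w) - b = G w from rfl, ← this,
    intervalIntegral.integral_of_le hw.le,
    MeasureTheory.integral_Ioc_eq_integral_Ioo, MeasureTheory.integral_const_mul]

lemma Gamma_k_half_pos (k : ℕ) : 0 < Real.Gamma ((k:ℝ) + 1/2) :=
  Real.Gamma_pos_of_pos (by positivity)

lemma beta_half (k : ℕ) :
    ∫ x in (0:ℝ)..1, x ^ ((k:ℝ) - 1/2) * (1-x) ^ (-(1/2):ℝ)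
      = Real.Gamma ((k:ℝ)+1/2) * Real.sqrt Real.pi / (k.factorial : ℝ) := by
  have h1 := Complex.Gamma_mul_Gamma_eq_betaIntegral (s := (k:ℂ)+1/2) (t := 1/2)
    (by simp; positivity) (by norm_num)
  have h2 : ((k:ℂ)+1/2) + 1/2 = ((k:ℕ):ℂ) + 1 := by ring
  rw [h2, Complex.Gamma_nat_eq_factorial] at h1
  have h3 : Complex.betaIntegral ((k:ℂ)+1/2) (1/2)
      = ((∫ x in (0:ℝ)..1, x ^ ((k:ℝ) - 1/2) * (1-x) ^ (-(1/2):ℝ) : ℝ) : ℂ) := by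
    rw [Complex.betaIntegral, ← intervalIntegral.integral_ofReal]
    refine intervalIntegral.integral_congr fun x hx => ?_
    rw [Set.uIcc_of_le (by norm_num : (0:ℝ) ≤ 1)] at hx
    push_cast
    rw [Complex.ofReal_cpow hx.1, Complex.ofReal_cpow (by linarith [hx.2])]
    push_cast
    ring_nf
  rw [h3] at h1
  have h4 : Complex.Gamma ((k:ℂ)+1/2) = ((Real.Gamma ((k:ℝ)+1/2) : ℝ) : ℂ) := by
    rw [← Complex.Gamma_ofReal]
    push_cast
    ring_nf
  have h5 : Complex.Gamma (1/2 : ℂ) = ((Real.sqrt Real.pi : ℝ) : ℂ) := by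
    rw [show ((1:ℂ)/2) = ((1/2 : ℝ) : ℂ) by norm_num, Complex.Gamma_ofReal,
      Real.Gamma_one_half_eq]
  rw [h4, h5] at h1
  have h6 : Real.Gamma ((k:ℝ)+1/2) * Real.sqrt Real.pi
      = (k.factorial : ℝ) * ∫ x in (0:ℝ)..1, x ^ ((k:ℝ) - 1/2) * (1-x) ^ (-(1/2):ℝ) := by
    exact_mod_cast h1
  have hfacR : ((k.factorial : ℝ)) ≠ 0 := Nat.cast_ne_zero.2 k.factorial_ne_zero
  rw [h6, mul_div_cancel_left₀ _ hfacR]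

lemma beta_scaled (k : ℕ) {u : ℝ} (hu : 0 < u) :
    ∫ s in (0:ℝ)..u, s ^ ((k:ℝ) - 1/2) * (u-s) ^ (-(1/2):ℝ)
      = u^k * (Real.Gamma ((k:ℝ)+1/2) * Real.sqrt Real.pi / (k.factorial : ℝ)) := by
  have hsub := intervalIntegral.integral_comp_mul_right
    (fun s => s ^ ((k:ℝ) - 1/2) * (u-s) ^ (-(1/2):ℝ)) hu.ne' (a := 0) (b := 1)
  rw [zero_mul, one_mul] at hsub
  have key : ∫ x in (0:ℝ)..1, (x*u) ^ ((k:ℝ) - 1/2) * (u-x*u) ^ (-(1/2):ℝ)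
      = u ^ ((k:ℝ) - 1) * ∫ x in (0:ℝ)..1, x ^ ((k:ℝ) - 1/2) * (1-x) ^ (-(1/2):ℝ) := by
    rw [← intervalIntegral.integral_const_mul]
    refine intervalIntegral.integral_congr fun x hx => ?_
    rw [Set.uIcc_of_le (by norm_num : (0:ℝ) ≤ 1)] at hx
    rw [show u - x*u = (1-x)*u by ring, Real.mul_rpow hx.1 hu.le,
      Real.mul_rpow (by linarith [hx.2]) hu.le]
    rw [show u ^ ((k:ℝ) - 1) = u ^ ((k:ℝ) - 1/2) * u ^ (-(1/2):ℝ) by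
      rw [← Real.rpow_add hu]; congr 1; ring]
    ring
  rw [key] at hsub
  have : (∫ s in (0:ℝ)..u, s ^ ((k:ℝ) - 1/2) * (u-s) ^ (-(1/2):ℝ))
      = u * (u ^ ((k:ℝ) - 1) * ∫ x in (0:ℝ)..1, x ^ ((k:ℝ) - 1/2) * (1-x) ^ (-(1/2):ℝ)) := by
    rw [smul_eq_mul] at hsub
    rw [hsub, ← mul_assoc, mul_inv_cancel₀ hu.ne', one_mul]
  rw [this, beta_half, ← mul_assoc]
  congr 1
  rw [show u * u ^ ((k:ℝ) - 1) = u ^ (1:ℝ) * u ^ ((k:ℝ) - 1) by rw [Real.rpow_one],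
    ← Real.rpow_add hu, ← Real.rpow_natCast u k]
  norm_num

lemma K_pointwise (b : ℝ) (k : ℕ) {u s : ℝ} (hs : 0 < s) (hsu : s < u) :
    s^k * (auxH b s * auxH b (u-s))
      = Real.exp (-(b^2/2)*u) / (2*Real.pi)
          * (s ^ ((k:ℝ) - 1/2) * (u-s) ^ (-(1/2):ℝ)) := by
  have hus : 0 < u - s := by linarith
  unfold auxH
  rw [div_mul_div_comm, ← Real.exp_add, show (-(b^2/2)*s + -(b^2/2)*(u-s)) = -(b^2/2)*u by ring]
  rw [show Real.sqrt (2*Real.pi) * Real.sqrt s * (Real.sqrt (2*Real.pi) * Real.sqrt (u-s))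
      = (2*Real.pi) * (Real.sqrt s * Real.sqrt (u-s)) by
    conv_rhs => rw [← Real.mul_self_sqrt (by positivity : (0:ℝ) ≤ 2*Real.pi)]
    ring]
  rw [Real.rpow_neg hus.le, ← Real.sqrt_eq_rpow,
    show (k:ℝ) - 1/2 = (k:ℝ) + (-(1/2):ℝ) by ring, Real.rpow_add hs,
    Real.rpow_neg hs.le, ← Real.sqrt_eq_rpow, Real.rpow_natCast]
  have h1 : Real.sqrt s ≠ 0 := (Real.sqrt_pos.2 hs).ne'
  have h2 : Real.sqrt (u-s) ≠ 0 := (Real.sqrt_pos.2 hus).ne'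
  have h3 : (2*Real.pi) ≠ 0 := by positivity
  field_simp

lemma K_value (b : ℝ) (k : ℕ) {u : ℝ} (hu : 0 < u) :
    ∫ s in Set.Ioo (0:ℝ) u, s^k * (auxH b s * auxH b (u-s))
      = Real.Gamma ((k:ℝ)+1/2) / (Real.sqrt Real.pi * (k.factorial : ℝ)) / 2
          * (u^k * Real.exp (-(b^2/2)*u)) := by
  have h1 : ∫ s in Set.Ioo (0:ℝ) u, s^k * (auxH b s * auxH b (u-s))
      = ∫ s in Set.Ioo (0:ℝ) u, Real.exp (-(b^2/2)*u) / (2*Real.pi)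
          * (s ^ ((k:ℝ) - 1/2) * (u-s) ^ (-(1/2):ℝ)) := by
    refine setIntegral_congr_fun measurableSet_Ioo fun s hs => ?_
    exact K_pointwise b k hs.1 hs.2
  rw [h1, MeasureTheory.integral_const_mul, ← MeasureTheory.integral_Ioc_eq_integral_Ioo,
    ← intervalIntegral.integral_of_le hu.le, beta_scaled k hu]
  have hpi : Real.sqrt Real.pi * Real.sqrt Real.pi = Real.pi :=
    Real.mul_self_sqrt Real.pi_pos.le
  have hsp : (0:ℝ) < Real.sqrt Real.pi := Real.sqrt_pos.2 Real.pi_pos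
  have hfac : (0:ℝ) < (k.factorial : ℝ) := by exact_mod_cast k.factorial_pos
  conv_lhs => rw [← hpi]
  field_simp
  rw [Real.sqrt_sq hsp.le]

lemma K_integrable (b : ℝ) (k : ℕ) {u : ℝ} (hk : 1 ≤ k) (hu : 0 < u) :
    IntegrableOn (fun s => s^k * (auxH b s * auxH b (u-s))) (Set.Ioo 0 u) := by
  have hrefl : IntegrableOn (fun s => auxH b (u - s)) (Set.Ioo 0 u) := by
    have h0 : IntervalIntegrable (auxH b) volume 0 u := by
      rw [intervalIntegrable_iff, Set.uIoc_of_le hu.le]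
      exact (integrableOn_Ioc_iff_integrableOn_Ioo).2 auxH_integrableOn
    have := (h0.comp_sub_left u)
    rw [sub_zero, sub_self] at this
    rw [intervalIntegrable_iff, Set.uIoc_comm, Set.uIoc_of_le hu.le] at this
    exact this.mono_set Set.Ioo_subset_Ioc_self
  set M : ℝ := u ^ ((k:ℝ) - 1/2) * (Real.sqrt (2*Real.pi))⁻¹ with hM
  refine (hrefl.const_mul M).mono' ?_ ?_
  · exact ((measurable_id.pow_const k).mul ((auxH_meas b).mul
      ((auxH_meas b).comp (measurable_const.sub measurable_id)))).aestronglyMeasurable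
  filter_upwards [ae_restrict_mem measurableSet_Ioo] with s hs
  rw [Real.norm_eq_abs, abs_of_nonneg (mul_nonneg (pow_nonneg hs.1.le _)
    (mul_nonneg (auxH_nonneg _ _) (auxH_nonneg _ _)))]
  have hA : (0:ℝ) < Real.sqrt (2*Real.pi) := sqrt_two_pi_pos
  have hss : (0:ℝ) < Real.sqrt s := Real.sqrt_pos.2 hs.1
  have hmain : s^k * auxH b s ≤ M := by
    have hexp : Real.exp (-(b^2/2)*s) ≤ 1 := by
      rw [Real.exp_le_one_iff]; nlinarith [sq_nonneg b, hs.1.le]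
    calc s^k * auxH b s ≤ s^k * (1 / (Real.sqrt (2*Real.pi) * Real.sqrt s)) := by
          unfold auxH
          rw [div_eq_mul_one_div]
          exact mul_le_mul_of_nonneg_left
            (mul_le_of_le_one_left (by positivity) hexp) (pow_nonneg hs.1.le _)
      _ = s ^ ((k:ℝ) - 1/2) * (Real.sqrt (2*Real.pi))⁻¹ := by
          rw [show (k:ℝ) - 1/2 = (k:ℝ) + (-(1/2):ℝ) by ring, Real.rpow_add hs.1,
            Real.rpow_neg hs.1.le, ← Real.sqrt_eq_rpow, Real.rpow_natCast]
          field_simp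
      _ ≤ M := by
          rw [hM]
          gcongr
          · exact hs.1.le
          · have : (1:ℝ) ≤ (k:ℝ) := by exact_mod_cast hk
            linarith
          · exact hs.2.le
  calc s^k * (auxH b s * auxH b (u-s)) = (s^k * auxH b s) * auxH b (u-s) := by ring
    _ ≤ M * auxH b (u-s) := mul_le_mul_of_nonneg_right hmain (auxH_nonneg _ _)

lemma ibp_exp (c t : ℝ) (k : ℕ) (hk : 1 ≤ k) :
    t^k * Real.exp (-c*t) + c * ∫ u in (0:ℝ)..t, u^k * Real.exp (-c*u)
      = k * ∫ u in (0:ℝ)..t, u^(k-1) * Real.exp (-c*u) := by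
  have hderiv : ∀ u : ℝ, HasDerivAt (fun u => u^k * Real.exp (-c*u))
      ((k:ℝ) * u^(k-1) * Real.exp (-c*u) - c * (u^k * Real.exp (-c*u))) u := by
    intro u
    have h1 : HasDerivAt (fun u : ℝ => u^k) ((k:ℝ) * u^(k-1)) u := hasDerivAt_pow k u
    have h2 : HasDerivAt (fun u : ℝ => Real.exp (-c*u)) (Real.exp (-c*u) * (-c)) u := by
      have := ((hasDerivAt_id u).const_mul (-c)).exp
      simpa using this
    have := h1.mul h2
    refine this.congr_deriv ?_
    ring
  have hint : ∫ u in (0:ℝ)..t, ((k:ℝ) * u^(k-1) * Real.exp (-c*u) - c * (u^k * Real.exp (-c*u)))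
      = t^k * Real.exp (-c*t) - 0^k * Real.exp (-c*0) := by
    apply intervalIntegral.integral_eq_sub_of_hasDerivAt (fun u _ => hderiv u)
    apply Continuous.intervalIntegrable
    fun_prop
  rw [intervalIntegral.integral_sub, intervalIntegral.integral_const_mul] at hint
  · rw [zero_pow (by omega), zero_mul, sub_zero] at hint
    have h3 : ∀ u : ℝ, (k:ℝ) * u^(k-1) * Real.exp (-c*u) = (k:ℝ) * (u^(k-1) * Real.exp (-c*u)) :=
      fun u => by ring
    simp_rw [h3, intervalIntegral.integral_const_mul] at hint
    linarith
  · apply Continuous.intervalIntegrable; fun_prop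
  · apply Continuous.intervalIntegrable; fun_prop

lemma lintegral_translate (f : ℝ → ENNReal) {s w : ℝ} :
    ∫⁻ u in Set.Ioo s w, f (u - s) = ∫⁻ v in Set.Ioo 0 (w - s), f v := by
  rw [← MeasureTheory.lintegral_indicator measurableSet_Ioo,
    ← MeasureTheory.lintegral_indicator measurableSet_Ioo]
  have hpt : ∀ u : ℝ, (Set.Ioo s w).indicator (fun u => f (u - s)) u
      = ((Set.Ioo 0 (w - s)).indicator f) (u - s) := by
    intro u
    by_cases h : u ∈ Set.Ioo s w
    · rw [Set.indicator_of_mem h, Set.indicator_of_mem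
        (by constructor <;> [linarith [h.1]; linarith [h.2]])]
    · rw [Set.indicator_of_notMem h, Set.indicator_of_notMem]
      intro hc
      exact h ⟨by linarith [hc.1], by linarith [hc.2]⟩
  simp_rw [hpt, sub_eq_add_neg]
  exact MeasureTheory.lintegral_add_right_eq_self _ (-s)

theorem moments_last_passage_affine
    {Ω : Type*} [MeasurableSpace Ω] (μ : Measure Ω) [IsProbabilityMeasure μ]
    (b t : ℝ) (ht : 0 < t) (g : Ω → ℝ) (hg : Measurable g)
    (hlaw : μ.map g
      = volume.withDensity (fun s =>
          Set.indicator (Set.Ioo (0 : ℝ) t)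
            (fun s => ENNReal.ofReal
              (stdNormalPdf (b * Real.sqrt s) / Real.sqrt s *
                (2 / Real.sqrt (t - s) * stdNormalPdf (b * Real.sqrt (t - s))
                  + 2 * b * stdNormalCdf (b * Real.sqrt (t - s)) - b))) s)) :
    ∀ k : ℕ, 1 ≤ k →
      ∫ ω, (g ω) ^ k ∂μ
        = Real.Gamma ((k : ℝ) + 1 / 2) / (Real.sqrt Real.pi * ((k - 1).factorial : ℝ))
            * ∫ u in (0 : ℝ)..t, u ^ ((k : ℕ) - 1) * Real.exp (-b ^ 2 / 2 * u) := by
  intro k hk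
  -- the real density function
  set F : ℝ → ℝ := fun s =>
    stdNormalPdf (b * Real.sqrt s) / Real.sqrt s *
      (2 / Real.sqrt (t - s) * stdNormalPdf (b * Real.sqrt (t - s))
        + 2 * b * stdNormalCdf (b * Real.sqrt (t - s)) - b) with hF
  set C : ℝ := Real.Gamma ((k:ℝ) + 1/2) / (Real.sqrt Real.pi * (k.factorial : ℝ)) with hC
  have hφ : Measurable stdNormalPdf := phi_cont.measurable
  have hΦ : Measurable stdNormalCdf := cdf_cont.measurable
  have hsqrtm : Measurable (fun s : ℝ => Real.sqrt s) := Real.continuous_sqrt.measurable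
  have hFm : Measurable F := by
    apply Measurable.mul
    · exact (hφ.comp (measurable_const.mul hsqrtm)).div hsqrtm
    · apply Measurable.sub _ measurable_const
      apply Measurable.add
      · exact ((measurable_const.div (hsqrtm.comp (measurable_const.sub measurable_id))).mul
          (hφ.comp (measurable_const.mul (hsqrtm.comp (measurable_const.sub measurable_id)))))
      · exact measurable_const.mul
          (hΦ.comp (measurable_const.mul (hsqrtm.comp (measurable_const.sub measurable_id))))
  -- pointwise identity for the density
  have hFeq : ∀ s ∈ Set.Ioo (0:ℝ) t, F s
      = 2 * (s^0 * 1) * (auxH b s * auxH b (t-s))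
        + b^2 * auxH b s * ∫ v in Set.Ioo 0 (t-s), auxH b v := by
    intro s hs
    have hts : 0 < t - s := by linarith [hs.2]
    have e1 : stdNormalPdf (b * Real.sqrt s) / Real.sqrt s = auxH b s := phi_sqrt_div b hs.1.le
    have e2 : stdNormalPdf (b * Real.sqrt (t-s)) / Real.sqrt (t-s) = auxH b (t-s) :=
      phi_sqrt_div b hts.le
    have e3 := cdf_term b hts
    rw [hF]
    simp only
    rw [add_sub_assoc, e3, ← e1, ← e2]
    have h1 : Real.sqrt s ≠ 0 := (Real.sqrt_pos.2 hs.1).ne'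
    have h2 : Real.sqrt (t-s) ≠ 0 := (Real.sqrt_pos.2 hts).ne'
    field_simp
  -- a.e. the variable lies in (0, t)
  have hae : ∀ᵐ ω ∂μ, g ω ∈ Set.Ioo 0 t := by
    have hm : MeasurableSet ((Set.Ioo (0:ℝ) t)ᶜ) := measurableSet_Ioo.compl
    have h0 : μ (g ⁻¹' (Set.Ioo 0 t)ᶜ) = 0 := by
      rw [← Measure.map_apply hg hm, hlaw, withDensity_apply _ hm]
      have : ∀ᵐ s ∂(volume.restrict ((Set.Ioo (0:ℝ) t)ᶜ)),
          (Set.indicator (Set.Ioo (0:ℝ) t) (fun s => ENNReal.ofReal (F s))) s = 0 := by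
        filter_upwards [ae_restrict_mem hm] with s hs
        exact Set.indicator_of_notMem (by simpa using hs) _
      calc ∫⁻ s in (Set.Ioo (0:ℝ) t)ᶜ,
            (Set.indicator (Set.Ioo (0:ℝ) t) (fun s => ENNReal.ofReal (F s))) s
          = ∫⁻ _ in (Set.Ioo (0:ℝ) t)ᶜ, 0 := lintegral_congr_ae this
        _ = 0 := lintegral_zero
    rw [ae_iff]
    exact h0
  -- reduce to a lintegral against the density
  have hgsm : AEStronglyMeasurable (fun ω => (g ω)^k) μ := (hg.pow_const k).aestronglyMeasurable
  have hnn : 0 ≤ᵐ[μ] fun ω => (g ω)^k := by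
    filter_upwards [hae] with ω hω
    exact pow_nonneg hω.1.le k
  rw [MeasureTheory.integral_eq_lintegral_of_nonneg_ae hnn hgsm]
  have hmk : Measurable fun x : ℝ => ENNReal.ofReal (x^k) :=
    ENNReal.measurable_ofReal.comp (measurable_id.pow_const k)
  have hDm : Measurable (fun s => (Set.Ioo (0:ℝ) t).indicator
      (fun s => ENNReal.ofReal (F s)) s) :=
    (ENNReal.measurable_ofReal.comp hFm).indicator measurableSet_Ioo
  have step1 : ∫⁻ ω, ENNReal.ofReal ((g ω)^k) ∂μ
      = ∫⁻ x in Set.Ioo 0 t, ENNReal.ofReal (x^k * F x) := by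
    rw [← lintegral_map hmk hg, hlaw,
      lintegral_withDensity_eq_lintegral_mul _ hDm hmk, ← lintegral_indicator measurableSet_Ioo]
    refine lintegral_congr fun x => ?_
    by_cases hx : x ∈ Set.Ioo (0:ℝ) t
    · show (Set.Ioo (0:ℝ) t).indicator _ x * ENNReal.ofReal (x^k) = _
      rw [Set.indicator_of_mem hx, Set.indicator_of_mem hx, mul_comm,
        ← ENNReal.ofReal_mul (pow_nonneg hx.1.le k)]
    · show (Set.Ioo (0:ℝ) t).indicator _ x * ENNReal.ofReal (x^k) = _
      rw [Set.indicator_of_notMem hx, Set.indicator_of_notMem hx, zero_mul]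
  rw [step1]
  -- split the density integral in two parts
  have hm1 : Measurable fun x : ℝ => ENNReal.ofReal (2 * (x^k * (auxH b x * auxH b (t-x)))) := by
    refine ENNReal.measurable_ofReal.comp (measurable_const.mul
      ((measurable_id.pow_const k).mul ((auxH_meas b).mul
        ((auxH_meas b).comp (measurable_const.sub measurable_id)))))
  have hsplit : ∫⁻ x in Set.Ioo 0 t, ENNReal.ofReal (x^k * F x)
      = (∫⁻ x in Set.Ioo 0 t, ENNReal.ofReal (2 * (x^k * (auxH b x * auxH b (t-x)))))
        + ∫⁻ x in Set.Ioo 0 t, ENNReal.ofReal ((b^2 * x^k * auxH b x)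
            * ∫ v in Set.Ioo 0 (t-x), auxH b v) := by
    rw [← MeasureTheory.lintegral_add_left hm1]
    refine setLIntegral_congr_fun measurableSet_Ioo (fun x hx => ?_)
    have key : x^k * F x = 2 * (x^k * (auxH b x * auxH b (t-x)))
        + (b^2 * x^k * auxH b x) * ∫ v in Set.Ioo 0 (t-x), auxH b v := by
      rw [hFeq x hx]; ring
    rw [key, ENNReal.ofReal_add]
    · exact mul_nonneg (by norm_num) (mul_nonneg (pow_nonneg hx.1.le _)
        (mul_nonneg (auxH_nonneg _ _) (auxH_nonneg _ _)))
    · exact mul_nonneg (mul_nonneg (mul_nonneg (sq_nonneg b) (pow_nonneg hx.1.le _))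
        (auxH_nonneg _ _)) (setIntegral_nonneg measurableSet_Ioo fun v _ => auxH_nonneg b v)
  rw [hsplit]
  -- first term
  have hT1 : ∫⁻ x in Set.Ioo 0 t, ENNReal.ofReal (2 * (x^k * (auxH b x * auxH b (t-x))))
      = ENNReal.ofReal (C * (t^k * Real.exp (-(b^2/2)*t))) := by
    rw [← MeasureTheory.ofReal_integral_eq_lintegral_ofReal
      ((K_integrable b k hk ht).const_mul 2) ?_]
    · congr 1
      rw [MeasureTheory.integral_const_mul, K_value b k ht, hC]
      ring
    · filter_upwards [ae_restrict_mem measurableSet_Ioo] with x hx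
      exact mul_nonneg (by norm_num) (mul_nonneg (pow_nonneg hx.1.le _)
        (mul_nonneg (auxH_nonneg _ _) (auxH_nonneg _ _)))
  rw [hT1]
  -- second term: Fubini
  set S : Set (ℝ × ℝ) := {p : ℝ × ℝ | 0 < p.1 ∧ p.1 < p.2 ∧ p.2 < t} with hS
  have hSm : MeasurableSet S :=
    ((measurableSet_lt measurable_const measurable_fst).inter
      ((measurableSet_lt measurable_fst measurable_snd).inter
        (measurableSet_lt measurable_snd measurable_const)))
  set Q : ℝ × ℝ → ENNReal := fun p =>
    S.indicator (fun p => ENNReal.ofReal (b^2 * p.1^k * auxH b p.1 * auxH b (p.2 - p.1))) p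
    with hQ
  have hQF : Measurable fun p : ℝ × ℝ => b^2 * p.1^k * auxH b p.1 * auxH b (p.2 - p.1) :=
    ((measurable_const.mul (measurable_fst.pow_const k)).mul
      ((auxH_meas b).comp measurable_fst)).mul
      ((auxH_meas b).comp (measurable_snd.sub measurable_fst))
  have hQm : Measurable Q := (ENNReal.measurable_ofReal.comp hQF).indicator hSm
  have step_a : ∫⁻ x in Set.Ioo 0 t, ENNReal.ofReal ((b^2 * x^k * auxH b x)
        * ∫ v in Set.Ioo 0 (t-x), auxH b v)
      = ∫⁻ s, ∫⁻ u, Q (s, u) := by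
    rw [← lintegral_indicator measurableSet_Ioo]
    refine lintegral_congr fun s => ?_
    by_cases hs : s ∈ Set.Ioo (0:ℝ) t
    · rw [Set.indicator_of_mem hs]
      have hcnn : (0:ℝ) ≤ b^2 * s^k * auxH b s :=
        mul_nonneg (mul_nonneg (sq_nonneg b) (pow_nonneg hs.1.le _)) (auxH_nonneg _ _)
      rw [ENNReal.ofReal_mul hcnn,
        MeasureTheory.ofReal_integral_eq_lintegral_ofReal auxH_integrableOn
          (Filter.Eventually.of_forall fun v => auxH_nonneg b v),
        ← lintegral_translate (fun v => ENNReal.ofReal (auxH b v)),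
        ← MeasureTheory.lintegral_const_mul _
          (show Measurable fun u : ℝ => ENNReal.ofReal (auxH b (u - s)) from
            ENNReal.measurable_ofReal.comp ((auxH_meas b).comp (measurable_id.sub measurable_const))),
        ← lintegral_indicator measurableSet_Ioo]
      refine lintegral_congr fun u => ?_
      by_cases hu : u ∈ Set.Ioo s t
      · rw [Set.indicator_of_mem hu]
        simp only [hQ]
        rw [Set.indicator_of_mem (show (s,u) ∈ S from ⟨hs.1, hu.1, hu.2⟩),
          ← ENNReal.ofReal_mul hcnn]
      · rw [Set.indicator_of_notMem hu]
        simp only [hQ]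
        rw [Set.indicator_of_notMem (fun hc : (s,u) ∈ S => hu ⟨hc.2.1, hc.2.2⟩)]
    · rw [Set.indicator_of_notMem hs]
      have hz : ∀ u, Q (s, u) = 0 := fun u =>
        Set.indicator_of_notMem (fun hc : (s,u) ∈ S => hs ⟨hc.1, hc.2.1.trans hc.2.2⟩) _
      simp [hz]
  have step_swap : ∫⁻ s, ∫⁻ u, Q (s, u) = ∫⁻ u, ∫⁻ s, Q (s, u) :=
    lintegral_lintegral_swap hQm.aemeasurable
  have step_b : ∫⁻ u, ∫⁻ s, Q (s, u)
      = ∫⁻ u in Set.Ioo 0 t, ENNReal.ofReal (b^2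
          * (C/2 * (u^k * Real.exp (-(b^2/2)*u)))) := by
    rw [← lintegral_indicator measurableSet_Ioo]
    refine lintegral_congr fun u => ?_
    by_cases hu : u ∈ Set.Ioo (0:ℝ) t
    · rw [Set.indicator_of_mem hu]
      have inner : ∫⁻ s, Q (s, u)
          = ∫⁻ s in Set.Ioo 0 u, ENNReal.ofReal (b^2 * (s^k * (auxH b s * auxH b (u-s)))) := by
        rw [← lintegral_indicator measurableSet_Ioo]
        refine lintegral_congr fun s' => ?_
        by_cases hs' : s' ∈ Set.Ioo (0:ℝ) u
        · simp only [hQ]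
          rw [Set.indicator_of_mem (show (s',u) ∈ S from ⟨hs'.1, hs'.2, hu.2⟩),
            Set.indicator_of_mem hs']
          congr 1
          ring
        · simp only [hQ]
          rw [Set.indicator_of_notMem (fun hc : (s',u) ∈ S => hs' ⟨hc.1, hc.2.1⟩),
            Set.indicator_of_notMem hs']
      rw [inner, ← MeasureTheory.ofReal_integral_eq_lintegral_ofReal
        ((K_integrable b k hk hu.1).const_mul (b^2)) ?_]
      · congr 1
        rw [MeasureTheory.integral_const_mul, K_value b k hu.1, hC]
      · filter_upwards [ae_restrict_mem measurableSet_Ioo] with s hsm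
        exact mul_nonneg (sq_nonneg b) (mul_nonneg (pow_nonneg hsm.1.le _)
          (mul_nonneg (auxH_nonneg _ _) (auxH_nonneg _ _)))
    · rw [Set.indicator_of_notMem hu]
      have hz : ∀ s, Q (s, u) = 0 := fun s' =>
        Set.indicator_of_notMem (fun hc : (s',u) ∈ S => hu ⟨hc.1.trans hc.2.1, hc.2.2⟩) _
      simp [hz]
  have hT2' : ∫⁻ u in Set.Ioo 0 t, ENNReal.ofReal (b^2 * (C/2 * (u^k * Real.exp (-(b^2/2)*u))))
      = ENNReal.ofReal (∫ u in Set.Ioo 0 t, b^2 * (C/2 * (u^k * Real.exp (-(b^2/2)*u)))) := by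
    refine (MeasureTheory.ofReal_integral_eq_lintegral_ofReal ?_ ?_).symm
    · have hcont : Continuous fun u : ℝ => b^2 * (C/2 * (u^k * Real.exp (-(b^2/2)*u))) := by
        fun_prop
      exact (hcont.integrableOn_Icc (a := 0) (b := t)).mono_set Set.Ioo_subset_Icc_self
    · filter_upwards [ae_restrict_mem measurableSet_Ioo] with u hu
      have hCnn : 0 ≤ C := by
        rw [hC]; positivity
      exact mul_nonneg (sq_nonneg b) (mul_nonneg (by linarith)
        (mul_nonneg (pow_nonneg hu.1.le _) (Real.exp_nonneg _)))
  rw [step_a, step_swap, step_b, hT2']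
  -- put everything together
  have hA1nn : 0 ≤ C * (t^k * Real.exp (-(b^2/2)*t)) := by
    have hCnn : 0 ≤ C := by rw [hC]; positivity
    positivity
  have hA2nn : 0 ≤ ∫ u in Set.Ioo 0 t, b^2 * (C/2 * (u^k * Real.exp (-(b^2/2)*u))) := by
    refine setIntegral_nonneg measurableSet_Ioo fun u hu => ?_
    have hCnn : 0 ≤ C := by rw [hC]; positivity
    exact mul_nonneg (sq_nonneg b) (mul_nonneg (by linarith)
      (mul_nonneg (pow_nonneg hu.1.le _) (Real.exp_nonneg _)))
  rw [← ENNReal.ofReal_add hA1nn hA2nn, ENNReal.toReal_ofReal (by linarith)]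
  -- final real computation
  have hval : ∫ u in Set.Ioo (0:ℝ) t, b^2 * (C/2 * (u^k * Real.exp (-(b^2/2)*u)))
      = b^2 * (C/2 * ∫ u in (0:ℝ)..t, u^k * Real.exp (-(b^2/2)*u)) := by
    rw [MeasureTheory.integral_const_mul, MeasureTheory.integral_const_mul,
      ← MeasureTheory.integral_Ioc_eq_integral_Ioo, ← intervalIntegral.integral_of_le ht.le]
  rw [hval]
  have hibp := ibp_exp (b^2/2) t k hk
  have hCk : C * (k:ℝ) = Real.Gamma ((k:ℝ) + 1/2) / (Real.sqrt Real.pi * ((k-1).factorial : ℝ)) := by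
    have hfact : (k.factorial : ℝ) = (k:ℝ) * ((k-1).factorial : ℝ) := by
      rw [← Nat.cast_mul, Nat.mul_factorial_pred (by omega)]
    have h1 : Real.sqrt Real.pi ≠ 0 := (Real.sqrt_pos.2 Real.pi_pos).ne'
    have h2 : ((k-1).factorial : ℝ) ≠ 0 := Nat.cast_ne_zero.2 (k-1).factorial_ne_zero
    have h3 : (k:ℝ) ≠ 0 := Nat.cast_ne_zero.2 (by omega)
    rw [hC, hfact]
    field_simp
  have hexp_eq : ∀ u : ℝ, Real.exp (-b^2/2 * u) = Real.exp (-(b^2/2)*u) := fun u => by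
    congr 1; ring
  simp_rw [hexp_eq]
  rw [← hCk]
  linear_combination C * hibp
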